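/- Let T = (V, E) be a finite tree (connected, acyclic simple graph) and let (c_e)_{e ∈ E} be real numbers in [0,1]. Then ∫_{[0,1]^V} ∏_{e = {u,v} ∈ E} 𝟙{|x_u − x_v| ≤ c_e} d𝐱 ≤ ∏_{e ∈ E} min(2c_e, 1). -/

import Mathlib

open MeasureTheory
open scoped ENNReal

/-- The gap `|x_u − x_v|` across an undirected edge `{u,v}`. -/
noncomputable def edgeGap {V : Type*} (x : V → ℝ) : Sym2 V → ℝ :=
  Sym2.lift ⟨fun u v => |x u - x v|, fun u v => abs_sub_comm (x u) (x v)⟩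

lemma exists_tree_leaf {V : Type} [Fintype V] [DecidableEq V] (G : SimpleGraph V)
    (hT : G.IsTree) (E : Finset (Sym2 V)) (hE : ∀ e ∈ E, e ∈ G.edgeSet)
    (hne : E.Nonempty) :
    ∃ v : V, ∃ e₀ ∈ E, v ∈ e₀ ∧ ∀ e ∈ E, v ∈ e → e = e₀ := by
  classical
  have hconn := hT.isConnected
  obtain ⟨r⟩ := hconn.nonempty
  -- unique "downward" neighbor
  have key : ∀ v u₁ u₂ : V, G.Adj v u₁ → G.Adj v u₂ →
      G.dist u₁ r ≤ G.dist v r → G.dist u₂ r ≤ G.dist v r → u₁ = u₂ := by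
    have build : ∀ v u : V, (h : G.Adj v u) → G.dist u r ≤ G.dist v r →
        ∃ p : G.Walk v r, p.IsPath ∧ p.getVert 1 = u := by
      intro v u h hd
      obtain ⟨p, hp, hlen⟩ := hconn.exists_path_of_dist u r
      have hv : v ∉ p.support := by
        intro hv
        have hsplit := congrArg SimpleGraph.Walk.length (p.take_spec hv)
        rw [SimpleGraph.Walk.length_append] at hsplit
        have h1le : 1 ≤ (p.takeUntil v hv).length := by
          by_contra hcon
          push_neg at hcon
          have hz : (p.takeUntil v hv).length = 0 := by omega
          exact h.ne' (SimpleGraph.Walk.eq_of_length_eq_zero hz)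
        have hdrop : G.dist v r ≤ (p.dropUntil v hv).length :=
          SimpleGraph.dist_le _
        omega
      exact ⟨SimpleGraph.Walk.cons h p, hp.cons hv, by
        simp [SimpleGraph.Walk.getVert_cons_succ]⟩
    intro v u₁ u₂ h1 h2 hd1 hd2
    obtain ⟨p₁, hp₁, hg₁⟩ := build v u₁ h1 hd1
    obtain ⟨p₂, hp₂, hg₂⟩ := build v u₂ h2 hd2
    have hpq : (⟨p₁, hp₁⟩ : G.Path v r) = ⟨p₂, hp₂⟩ :=
      hT.IsAcyclic.path_unique _ _
    have : p₁ = p₂ := congrArg Subtype.val hpq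
    rw [← hg₁, ← hg₂, this]
  -- the support of E
  set S : Finset V := Finset.univ.filter (fun v => ∃ e ∈ E, v ∈ e) with hS
  have hSne : S.Nonempty := by
    obtain ⟨e, he⟩ := hne
    exact ⟨e.out.1, by simp [hS]; exact ⟨e, he, Sym2.out_fst_mem e⟩⟩
  obtain ⟨v, hvS, hvmax⟩ := Finset.exists_max_image S (fun v => G.dist v r) hSne
  rw [hS, Finset.mem_filter] at hvS
  obtain ⟨-, e₀, he₀E, hve₀⟩ := hvS
  refine ⟨v, e₀, he₀E, hve₀, ?_⟩
  intro e heE hve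
  have hother : ∀ (e' : Sym2 V), e' ∈ E → (h : v ∈ e') →
      G.Adj v (Sym2.Mem.other h) ∧ G.dist (Sym2.Mem.other h) r ≤ G.dist v r := by
    intro e' he' h
    have hadj : G.Adj v (Sym2.Mem.other h) := by
      rw [← SimpleGraph.mem_edgeSet, Sym2.other_spec h]
      exact hE e' he'
    refine ⟨hadj, hvmax _ ?_⟩
    rw [hS, Finset.mem_filter]
    exact ⟨Finset.mem_univ _, e', he', Sym2.other_mem h⟩
  obtain ⟨ha1, hd1⟩ := hother e heE hve
  obtain ⟨ha2, hd2⟩ := hother e₀ he₀E hve₀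
  have := key v _ _ ha1 ha2 hd1 hd2
  rw [← Sym2.other_spec hve, ← Sym2.other_spec hve₀, this]

lemma edgeGap_mk {V : Type*} (x : V → ℝ) (a b : V) : edgeGap x s(a, b) = |x a - x b| := rfl

lemma measurable_edgeGap {V : Type*} [Fintype V] (e : Sym2 V) :
    Measurable fun x : V → ℝ => edgeGap x e := by
  induction e using Sym2.ind with
  | _ a b => exact ((measurable_pi_apply a).sub (measurable_pi_apply b)).abs

lemma edgeGap_update_of_not_mem {V : Type*} [DecidableEq V] {v : V} {e : Sym2 V}
    (h : v ∉ e) (x : V → ℝ) (t : ℝ) :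
    edgeGap (Function.update x v t) e = edgeGap x e := by
  induction e using Sym2.ind with
  | _ a b =>
    rw [Sym2.mem_iff] at h
    push_neg at h
    rw [edgeGap_mk, edgeGap_mk, Function.update_of_ne (Ne.symm h.1),
      Function.update_of_ne (Ne.symm h.2)]

lemma inner_bound (a cc : ℝ) (hcc : 0 ≤ cc) :
    ∫⁻ t, (if |t - a| ≤ cc then (1 : ℝ≥0∞) else 0) ∂(volume.restrict (Set.Icc (0:ℝ) 1))
      ≤ ENNReal.ofReal (min (2 * cc) 1) := by
  have hset : {t : ℝ | |t - a| ≤ cc} = Set.Icc (a - cc) (a + cc) := by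
    ext t
    simp only [Set.mem_setOf_eq, Set.mem_Icc, abs_le]
    constructor <;> intro h <;> constructor <;> linarith [h.1, h.2]
  have hms : MeasurableSet {t : ℝ | |t - a| ≤ cc} := by
    rw [hset]; exact measurableSet_Icc
  have hfun : ∀ t : ℝ, (if |t - a| ≤ cc then (1 : ℝ≥0∞) else 0)
      = {t : ℝ | |t - a| ≤ cc}.indicator (fun _ => 1) t := by
    intro t; simp [Set.indicator_apply]
  simp only [hfun]
  rw [lintegral_indicator hms _, setLIntegral_one, Measure.restrict_apply hms, hset]
  have hmin : ENNReal.ofReal (min (2 * cc) 1)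
      = min (ENNReal.ofReal (2 * cc)) (ENNReal.ofReal 1) := by
    rcases le_total (2 * cc) 1 with h | h
    · rw [min_eq_left h, min_eq_left (ENNReal.ofReal_le_ofReal h)]
    · rw [min_eq_right h, min_eq_right (ENNReal.ofReal_le_ofReal h)]
  rw [hmin]
  refine le_min ?_ ?_
  · refine (measure_mono Set.inter_subset_left).trans_eq ?_
    rw [Real.volume_Icc]; ring_nf
  · refine (measure_mono Set.inter_subset_right).trans_eq ?_
    rw [Real.volume_Icc]; norm_num

lemma main_bound {V : Type} [Fintype V] [DecidableEq V] (G : SimpleGraph V)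
    (hT : G.IsTree) (c : Sym2 V → ℝ) (hc0 : ∀ e ∈ G.edgeSet, 0 ≤ c e)
    (E : Finset (Sym2 V)) (hE : ∀ e ∈ E, e ∈ G.edgeSet) :
    ∫⁻ x : V → ℝ, ∏ e ∈ E, (if edgeGap x e ≤ c e then (1 : ℝ≥0∞) else 0)
        ∂(Measure.pi fun _ : V => volume.restrict (Set.Icc (0:ℝ) 1))
      ≤ ∏ e ∈ E, ENNReal.ofReal (min (2 * c e) 1) := by
  classical
  set μ0 : Measure ℝ := volume.restrict (Set.Icc (0:ℝ) 1) with hμ0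
  have hprob : IsProbabilityMeasure μ0 := ⟨by simp [hμ0, Real.volume_Icc]⟩
  have hmeas : ∀ E' : Finset (Sym2 V),
      Measurable fun x : V → ℝ => ∏ e ∈ E', (if edgeGap x e ≤ c e then (1 : ℝ≥0∞) else 0) := by
    intro E'
    refine Finset.measurable_prod _ fun e _ => Measurable.ite ?_ measurable_const measurable_const
    exact measurableSet_le (measurable_edgeGap e) measurable_const
  induction E using Finset.strongInduction with
  | _ E ih =>
  rcases E.eq_empty_or_nonempty with rfl | hne
  · simp
  obtain ⟨v, e₀, he₀E, hve₀, huniq⟩ := exists_tree_leaf G hT E hE hne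
  set u : V := Sym2.Mem.other hve₀ with hu
  have he₀ : s(v, u) = e₀ := Sym2.other_spec hve₀
  have hadj : G.Adj v u := by rw [← SimpleGraph.mem_edgeSet, he₀]; exact hE e₀ he₀E
  set f : (V → ℝ) → ℝ≥0∞ :=
    fun x => ∏ e ∈ E, (if edgeGap x e ≤ c e then (1 : ℝ≥0∞) else 0) with hf
  set g : (V → ℝ) → ℝ≥0∞ :=
    fun x => ∏ e ∈ E.erase e₀, (if edgeGap x e ≤ c e then (1 : ℝ≥0∞) else 0) with hg
  set M : ℝ≥0∞ := ENNReal.ofReal (min (2 * c e₀) 1) with hM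
  have hg_update : ∀ (x : V → ℝ) (t : ℝ), g (Function.update x v t) = g x := by
    intro x t
    refine Finset.prod_congr rfl fun e he => ?_
    have hvnotin : v ∉ e := by
      intro hv
      exact (Finset.ne_of_mem_erase he) (huniq e (Finset.mem_of_mem_erase he) hv)
    rw [edgeGap_update_of_not_mem hvnotin]
  have hf_update : ∀ (x : V → ℝ) (t : ℝ),
      f (Function.update x v t) = (if |t - x u| ≤ c e₀ then (1 : ℝ≥0∞) else 0) * g x := by
    intro x t
    simp only [hf]
    rw [← Finset.mul_prod_erase E _ he₀E]
    congr 1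
    · congr 1
      rw [← he₀, edgeGap_mk, Function.update_self, Function.update_of_ne hadj.ne']
    · exact hg_update x t
  have hgle : ∀ x, g x ≤ 1 := fun x =>
    Finset.prod_le_one (fun _ _ => zero_le) (fun e _ => by split <;> simp)
  have x₀ : V → ℝ := fun _ => 0
  calc ∫⁻ x, f x ∂(Measure.pi fun _ : V => μ0)
      = (∫⋯∫⁻_Finset.univ, f ∂fun _ => μ0) x₀ := lintegral_eq_lmarginal_univ x₀
    _ = (∫⋯∫⁻_(Finset.univ.erase v),
          (fun x => ∫⁻ t, f (Function.update x v t) ∂μ0) ∂fun _ => μ0) x₀ := by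
        rw [← lmarginal_erase' _ (hmeas E) (Finset.mem_univ v)]
    _ ≤ (∫⋯∫⁻_(Finset.univ.erase v), (fun x => M * g x) ∂fun _ => μ0) x₀ := by
        refine lmarginal_mono (fun x => ?_) x₀
        calc ∫⁻ t, f (Function.update x v t) ∂μ0
            = ∫⁻ t, (if |t - x u| ≤ c e₀ then (1 : ℝ≥0∞) else 0) * g x ∂μ0 := by
              simp_rw [hf_update]
          _ = (∫⁻ t, (if |t - x u| ≤ c e₀ then (1 : ℝ≥0∞) else 0) ∂μ0) * g x :=
              lintegral_mul_const' _ _ (by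
                exact ne_top_of_le_ne_top ENNReal.one_ne_top (hgle x))
          _ ≤ M * g x := by
              refine mul_le_mul_left ?_ _
              exact inner_bound (x u) (c e₀) (hc0 e₀ (hE e₀ he₀E))
    _ = M * (∫⋯∫⁻_(Finset.univ.erase v), g ∂fun _ => μ0) x₀ := by
        simp only [lmarginal]
        rw [lintegral_const_mul' _ _ ENNReal.ofReal_ne_top]
    _ = M * (∫⋯∫⁻_Finset.univ, g ∂fun _ => μ0) x₀ := by
        congr 1
        have : (fun x => ∫⁻ t, g (Function.update x v t) ∂μ0) = g := by
          funext x
          simp [hg_update, lintegral_const]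
        rw [lmarginal_erase' _ (hmeas _) (Finset.mem_univ v), this]
    _ = M * ∫⁻ x, g x ∂(Measure.pi fun _ : V => μ0) := by
        rw [← lintegral_eq_lmarginal_univ x₀]
    _ ≤ M * ∏ e ∈ E.erase e₀, ENNReal.ofReal (min (2 * c e) 1) := by
        refine mul_le_mul_right ?_ _
        exact ih (E.erase e₀) (Finset.erase_ssubset he₀E)
          (fun e he => hE e (Finset.mem_of_mem_erase he))
    _ = ∏ e ∈ E, ENNReal.ofReal (min (2 * c e) 1) := by
        rw [hM]
        exact Finset.mul_prod_erase E (fun e => ENNReal.ofReal (min (2 * c e) 1)) he₀E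

/-- Upper bound on the band-constraint integral over a tree:
`Int_T(c) ≤ ∏_e min(2c_e, 1)`. -/
theorem tree_band_integral_upper {V : Type} [Fintype V] [DecidableEq V]
    (G : SimpleGraph V) [Fintype G.edgeSet] (hT : G.IsTree)
    (c : Sym2 V → ℝ) (hc : ∀ e ∈ G.edgeFinset, c e ∈ Set.Icc (0:ℝ) 1) :
    (∫ x in Set.univ.pi (fun _ : V => Set.Icc (0:ℝ) 1),
        ∏ e ∈ G.edgeFinset, (if edgeGap x e ≤ c e then (1:ℝ) else 0))
      ≤ ∏ e ∈ G.edgeFinset, min (2 * c e) 1 := by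
  classical
  have hμeq : (volume : Measure (V → ℝ)).restrict (Set.univ.pi fun _ : V => Set.Icc (0:ℝ) 1)
      = Measure.pi fun _ : V => volume.restrict (Set.Icc (0:ℝ) 1) := by
    refine (Measure.pi_eq fun s hs => ?_).symm
    rw [Measure.restrict_apply (MeasurableSet.univ_pi hs), ← Set.pi_inter_distrib,
      volume_pi_pi]
    exact Finset.prod_congr rfl fun i _ => (Measure.restrict_apply (hs i)).symm
  have hc0 : ∀ e ∈ G.edgeSet, 0 ≤ c e := fun e he =>
    (hc e (SimpleGraph.mem_edgeFinset.mpr he)).1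
  have hmeasR : Measurable fun x : V → ℝ =>
      ∏ e ∈ G.edgeFinset, (if edgeGap x e ≤ c e then (1:ℝ) else 0) := by
    refine Finset.measurable_prod _ fun e _ => Measurable.ite ?_ measurable_const measurable_const
    exact measurableSet_le (measurable_edgeGap e) measurable_const
  rw [MeasureTheory.integral_eq_lintegral_of_nonneg_ae
      (Filter.Eventually.of_forall fun x =>
        Finset.prod_nonneg fun e _ => by split <;> norm_num)
      ((hmeasR.aestronglyMeasurable).restrict)]
  have hptwise : ∀ x : V → ℝ,
      ENNReal.ofReal (∏ e ∈ G.edgeFinset, (if edgeGap x e ≤ c e then (1:ℝ) else 0))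
      = ∏ e ∈ G.edgeFinset, (if edgeGap x e ≤ c e then (1:ℝ≥0∞) else 0) := by
    intro x
    rw [ENNReal.ofReal_prod_of_nonneg (fun e _ => by split <;> norm_num)]
    exact Finset.prod_congr rfl fun e _ => by split <;> simp
  simp only [hptwise]
  have hmin0 : ∀ e ∈ G.edgeFinset, 0 ≤ min (2 * c e) 1 := fun e he =>
    le_min (by linarith [(hc e he).1]) zero_le_one
  refine ENNReal.toReal_le_of_le_ofReal (Finset.prod_nonneg hmin0) ?_
  rw [ENNReal.ofReal_prod_of_nonneg hmin0]
  rw [hμeq]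
  exact main_bound G hT c hc0 G.edgeFinset fun e he => SimpleGraph.mem_edgeFinset.mp he
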